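/- arXiv:1802.07902 — 2 statements merged into one kernel-verified Lean document; each statement's English description precedes it below -/
import Mathlib

section
/- Let q>1. The function b : ℝ × ℝ^d → ℝ ∪ {+∞} defined by b(m,w) = |w|^q/(q m^{q-1}) if m>0, b(0,0)=0, and b(m,w)=+∞ otherwise, is lower semicontinuous. -/
/-- The function `b(m,w) = ‖w‖^q/(q m^{q-1})` for `m>0`, `b(0,0)=0`, `+∞` otherwise,
is lower semicontinuous on `ℝ × ℝ^d`. -/
theorem stmt_2 (d : ℕ) (q : ℝ) (hq : 1 < q)
    (b : ℝ × EuclideanSpace ℝ (Fin d) → EReal)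
    (hb_pos : ∀ (m : ℝ) (w : EuclideanSpace ℝ (Fin d)), 0 < m →
      b (m, w) = ((‖w‖ ^ q / (q * m ^ (q - 1)) : ℝ) : EReal))
    (hb_zero : b (0, 0) = 0)
    (hb_top : ∀ (m : ℝ) (w : EuclideanSpace ℝ (Fin d)), ¬ 0 < m → ¬ (m = 0 ∧ w = 0) →
      b (m, w) = ⊤) :
    LowerSemicontinuous b := by
  have hq0 : (0:ℝ) < q := lt_trans one_pos hq
  have hq1 : (0:ℝ) < q - 1 := by linarith
  have hnn : ∀ p, (0 : EReal) ≤ b p := by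
    rintro ⟨m, w⟩
    by_cases hm : 0 < m
    · rw [hb_pos m w hm]
      have : (0:ℝ) ≤ ‖w‖ ^ q / (q * m ^ (q - 1)) :=
        div_nonneg (Real.rpow_nonneg (norm_nonneg w) q)
          (le_of_lt (by positivity))
      exact_mod_cast this
    · by_cases h0 : m = 0 ∧ w = 0
      · rw [h0.1, h0.2, hb_zero]
      · rw [hb_top m w hm h0]; exact le_top
  rintro ⟨m, w⟩ y hy
  rcases lt_trichotomy m 0 with hm | hm | hm
  · -- m < 0 : b = ⊤ in a neighborhood
    have hmem : {p : ℝ × EuclideanSpace ℝ (Fin d) | p.1 < 0} ∈ nhds (m, w) :=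
      (isOpen_lt continuous_fst continuous_const).mem_nhds hm
    rw [hb_top m w (not_lt.mpr hm.le) (fun h => absurd h.1 hm.ne)] at hy
    filter_upwards [hmem] with p hp
    have : b (p.1, p.2) = ⊤ :=
      hb_top p.1 p.2 (not_lt.mpr hp.le) (by rintro ⟨h1, _⟩; rw [h1] at hp; exact lt_irrefl 0 hp)
    calc y < ⊤ := hy
    _ = b p := this.symm
  · -- m = 0
    subst hm
    by_cases hw : w = 0
    · subst hw
      rw [hb_zero] at hy
      filter_upwards with p using lt_of_lt_of_le hy (hnn p)
    · rw [hb_top 0 w (lt_irrefl 0) (fun h => hw h.2)] at hy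
      obtain ⟨M₀, hyM₀, -⟩ := EReal.exists_between_coe_real hy
      set M : ℝ := max M₀ 1 with hM
      have hM0 : (0:ℝ) < M := lt_of_lt_of_le one_pos (le_max_right _ _)
      have hyM : y < (M : EReal) := lt_of_lt_of_le hyM₀ (by exact_mod_cast le_max_left M₀ 1)
      set c : ℝ := ‖w‖ / 2 with hc
      have hc0 : 0 < c := by
        have : 0 < ‖w‖ := norm_pos_iff.mpr hw
        positivity
      set δ : ℝ := (c ^ q / (q * M)) ^ (1 / (q - 1)) with hδ
      have hδ0 : 0 < δ := by
        apply Real.rpow_pos_of_pos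
        positivity
      have hδval : δ ^ (q - 1) = c ^ q / (q * M) := by
        rw [hδ, ← Real.rpow_mul (by positivity), one_div,
          inv_mul_cancel₀ hq1.ne', Real.rpow_one]
      have hmem : {p : ℝ × EuclideanSpace ℝ (Fin d) | c < ‖p.2‖ ∧ p.1 < δ} ∈
          nhds ((0:ℝ), w) := by
        apply IsOpen.mem_nhds
        · exact (isOpen_lt continuous_const continuous_snd.norm).inter
            (isOpen_lt continuous_fst continuous_const)
        · constructor
          · show c < ‖w‖
            rw [hc]
            have : 0 < ‖w‖ := norm_pos_iff.mpr hw
            linarith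
          · exact hδ0
      filter_upwards [hmem] with p hp
      obtain ⟨hp1, hp2⟩ := hp
      rcases lt_or_ge 0 p.1 with hpm | hpm
      · have hb : b (p.1, p.2) = ((‖p.2‖ ^ q / (q * p.1 ^ (q - 1)) : ℝ) : EReal) :=
          hb_pos p.1 p.2 hpm
        have hlt : M < ‖p.2‖ ^ q / (q * p.1 ^ (q - 1)) := by
          have h1 : c ^ q < ‖p.2‖ ^ q := Real.rpow_lt_rpow hc0.le hp1 hq0
          have h2 : p.1 ^ (q - 1) < δ ^ (q - 1) := Real.rpow_lt_rpow hpm.le hp2 hq1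
          have h3 : M = c ^ q / (q * δ ^ (q - 1)) := by
            rw [hδval]
            field_simp
          rw [h3]
          gcongr
        calc y < (M : EReal) := hyM
        _ < ((‖p.2‖ ^ q / (q * p.1 ^ (q - 1)) : ℝ) : EReal) := by exact_mod_cast hlt
        _ = b p := hb.symm
      · have hw' : p.2 ≠ 0 := by
          intro h
          rw [h] at hp1
          simp at hp1
          linarith
        have : b (p.1, p.2) = ⊤ :=
          hb_top p.1 p.2 (not_lt.mpr hpm) (fun h => hw' h.2)
        calc y < (M : EReal) := hyM
        _ ≤ ⊤ := le_top
        _ = b p := this.symm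
  · -- m > 0 : b is continuous there
    rw [hb_pos m w hm] at hy
    have hcont : ContinuousAt
        (fun p : ℝ × EuclideanSpace ℝ (Fin d) =>
          ((‖p.2‖ ^ q / (q * p.1 ^ (q - 1)) : ℝ) : EReal)) (m, w) := by
      apply continuous_coe_real_ereal.continuousAt.comp
      apply ContinuousAt.div
      · exact (continuous_snd.norm.rpow_const (fun x => Or.inr hq0.le)).continuousAt
      · exact continuousAt_const.mul
          ((Real.continuousAt_rpow_const m (q - 1) (Or.inl hm.ne')).comp (x := (m, w))
            continuousAt_fst :)
      · positivity
    have hmem1 : {p : ℝ × EuclideanSpace ℝ (Fin d) | 0 < p.1} ∈ nhds (m, w) :=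
      (isOpen_lt continuous_const continuous_fst).mem_nhds hm
    have hmem2 := hcont (Ioi_mem_nhds hy)
    filter_upwards [hmem1, hmem2] with p hp1 hp2
    have : b (p.1, p.2) = ((‖p.2‖ ^ q / (q * p.1 ^ (q - 1)) : ℝ) : EReal) :=
      hb_pos p.1 p.2 hp1
    exact this ▸ hp2
end

section
/- Let q > 1, m > 0, u ∈ ℝ⁴, and K = ℝ₊ × ℝ₋ × ℝ₊ × ℝ₋. The vector w = m |P_K(-u)|^{(2-q)/(q-1)} P_K(-u) (with the convention that this is 0 when P_K(-u)=0) satisfies the inclusion -u ∈ |w|^{q-2} w / m^{q-1} + N_K(w), where N_K(w) is the normal cone to K at w. -/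
open InnerProductSpace

lemma aux_max (a y c : ℝ) (hy : 0 ≤ y) (hc : 0 ≤ c) :
    (a - max a 0) * (y - c * max a 0) ≤ 0 := by
  rcases le_or_gt 0 a with h | h
  · simp [max_eq_left h]
  · rw [max_eq_right h.le]
    nlinarith

lemma aux_min (a y c : ℝ) (hy : y ≤ 0) (hc : 0 ≤ c) :
    (a - min a 0) * (y - c * min a 0) ≤ 0 := by
  rcases le_or_gt a 0 with h | h
  · simp [min_eq_left h]
  · rw [min_eq_right h.le]
    nlinarith

/-- With `w = m |P_K(-u)|^{(2-q)/(q-1)} P_K(-u)`, the inclusion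
`-u ∈ |w|^{q-2} w / m^{q-1} + N_K(w)` holds, where `N_K(w)` is the normal cone of
`K = ℝ₊ × ℝ₋ × ℝ₊ × ℝ₋` at `w`. -/
theorem stmt_18 (q m : ℝ) (hq : 1 < q) (hm : 0 < m)
    (K : Set (EuclideanSpace ℝ (Fin 4)))
    (hK : K = {v : EuclideanSpace ℝ (Fin 4) | 0 ≤ v 0 ∧ v 1 ≤ 0 ∧ 0 ≤ v 2 ∧ v 3 ≤ 0})
    (u Pu : EuclideanSpace ℝ (Fin 4))
    (hPu0 : Pu 0 = max (-u 0) 0) (hPu1 : Pu 1 = min (-u 1) 0)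
    (hPu2 : Pu 2 = max (-u 2) 0) (hPu3 : Pu 3 = min (-u 3) 0)
    (w : EuclideanSpace ℝ (Fin 4))
    (hw : w = (m * ‖Pu‖ ^ ((2 - q) / (q - 1))) • Pu) :
    w ∈ K ∧ ∀ y ∈ K, ⟪(-u) - ((‖w‖ ^ (q - 2) / m ^ (q - 1)) • w), y - w⟫_ℝ ≤ 0 := by
  set c : ℝ := m * ‖Pu‖ ^ ((2 - q) / (q - 1)) with hc_def
  have hc : 0 ≤ c := mul_nonneg hm.le (Real.rpow_nonneg (norm_nonneg _) _)
  have hwi : ∀ i, w i = c * Pu i := by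
    intro i; rw [hw]; rfl
  have hwK : w ∈ K := by
    rw [hK]
    refine ⟨?_, ?_, ?_, ?_⟩ <;> rw [hwi]
    · rw [hPu0]; exact mul_nonneg hc (le_max_right _ _)
    · rw [hPu1]; exact mul_nonpos_of_nonneg_of_nonpos hc (min_le_right _ _)
    · rw [hPu2]; exact mul_nonneg hc (le_max_right _ _)
    · rw [hPu3]; exact mul_nonpos_of_nonneg_of_nonpos hc (min_le_right _ _)
  have hsw : (‖w‖ ^ (q - 2) / m ^ (q - 1)) • w = Pu := by
    rcases eq_or_ne Pu 0 with h0 | h0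
    · have : w = 0 := by rw [hw, h0, smul_zero]
      rw [this, h0, smul_zero]
    · have ht : (0:ℝ) < ‖Pu‖ := norm_pos_iff.mpr h0
      have hq1 : q - 1 ≠ 0 := by linarith
      have hcpos : 0 < c := mul_pos hm (Real.rpow_pos_of_pos ht _)
      have hnw : ‖w‖ = m * ‖Pu‖ ^ ((1:ℝ)/(q-1)) := by
        rw [hw, norm_smul, Real.norm_eq_abs, abs_of_nonneg hc, hc_def, mul_assoc]
        congr 1
        rw [← Real.rpow_add_one ht.ne']
        congr 1
        field_simp
        norm_num
      have e1 : m ^ (q-2) * m = m ^ (q-1) := by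
        nth_rewrite 2 [← Real.rpow_one m]
        rw [← Real.rpow_add hm]
        ring_nf
      have e2 : ‖Pu‖ ^ ((1:ℝ)/(q-1)*(q-2)) * ‖Pu‖ ^ ((2-q)/(q-1)) = 1 := by
        rw [← Real.rpow_add ht, show (1:ℝ)/(q-1)*(q-2) + (2-q)/(q-1) = 0 by
          field_simp; ring, Real.rpow_zero]
      have key : ‖w‖ ^ (q-2) / m ^ (q-1) * c = 1 := by
        rw [hnw, hc_def, Real.mul_rpow hm.le (Real.rpow_nonneg ht.le _),
          ← Real.rpow_mul ht.le]
        calc m ^ (q-2) * ‖Pu‖ ^ ((1:ℝ)/(q-1)*(q-2)) / m ^ (q-1) *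
              (m * ‖Pu‖ ^ ((2-q)/(q-1)))
            = (m ^ (q-2) * m / m ^ (q-1)) *
              (‖Pu‖ ^ ((1:ℝ)/(q-1)*(q-2)) * ‖Pu‖ ^ ((2-q)/(q-1))) := by ring
          _ = 1 := by
              rw [e1, e2, mul_one, div_self (Real.rpow_pos_of_pos hm _).ne']
      nth_rewrite 2 [hw]
      rw [smul_smul, key, one_smul]
  refine ⟨hwK, ?_⟩
  rw [hsw]
  intro y hy
  rw [hK] at hy
  obtain ⟨hy0, hy1, hy2, hy3⟩ := hy
  have hinner : ⟪(-u) - Pu, y - w⟫_ℝ =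
      ∑ i : Fin 4, ((-u) i - Pu i) * (y i - w i) := by
    rw [PiLp.inner_apply]
    simp [RCLike.inner_apply, PiLp.sub_apply, PiLp.neg_apply]
    exact Finset.sum_congr rfl (fun i _ => mul_comm _ _)
  rw [hinner, Fin.sum_univ_four]
  have h0 := aux_max (-u 0) (y 0) c hy0 hc
  have h1 := aux_min (-u 1) (y 1) c hy1 hc
  have h2 := aux_max (-u 2) (y 2) c hy2 hc
  have h3 := aux_min (-u 3) (y 3) c hy3 hc
  rw [hwi 0, hwi 1, hwi 2, hwi 3, hPu0, hPu1, hPu2, hPu3]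
  simp only [PiLp.neg_apply]
  linarith
end
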